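/- At every point (x, y, θ) ∈ 𝕋 × ℝ × 𝕋 with κ, γ, σ > 0, the vector fields X̃₀, X̃₂, and iterated Lie brackets of X̃₂ with X̃₀ span ℝ³, i.e., the projective process of the randomly forced pendulum satisfies the weak Hörmander condition. Specifically: if θ ≠ π and x ∉ {0, π}, then X̃₂, [X̃₂,X̃₀], [[X̃₂,X̃₀],X̃₀] span ℝ³; if θ = π, then X̃₂, [X̃₂,X̃₀], X̃₀ span ℝ³; and if x ∈ {0,π} with θ ≠ π, then X̃₂, [X̃₂,X̃₀], [[[[X̃₂,X̃₀],X̃₀],X̃₀],X̃₂] span ℝ³. -/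

import Mathlib

open Real

/-- Lie bracket of vector fields on ℝ³ (identified with ℝ × ℝ × ℝ):
`[U, V](p) = DV(p) U(p) − DU(p) V(p)`. -/
noncomputable def lieBracket (U V : ℝ × ℝ × ℝ → ℝ × ℝ × ℝ) : ℝ × ℝ × ℝ → ℝ × ℝ × ℝ :=
  fun p => fderiv ℝ V p (U p) - fderiv ℝ U p (V p)

noncomputable def px : (ℝ×ℝ×ℝ) →L[ℝ] ℝ := ContinuousLinearMap.fst ℝ ℝ (ℝ×ℝ)
noncomputable def py : (ℝ×ℝ×ℝ) →L[ℝ] ℝ :=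
  (ContinuousLinearMap.fst ℝ ℝ ℝ).comp (ContinuousLinearMap.snd ℝ ℝ (ℝ×ℝ))
noncomputable def pθ : (ℝ×ℝ×ℝ) →L[ℝ] ℝ :=
  (ContinuousLinearMap.snd ℝ ℝ ℝ).comp (ContinuousLinearMap.snd ℝ ℝ (ℝ×ℝ))

lemma hpx (p : ℝ×ℝ×ℝ) : HasFDerivAt (fun p : ℝ×ℝ×ℝ => p.1) px p := px.hasFDerivAt
lemma hpy (p : ℝ×ℝ×ℝ) : HasFDerivAt (fun p : ℝ×ℝ×ℝ => p.2.1) py p := py.hasFDerivAt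
lemma hpθ (p : ℝ×ℝ×ℝ) : HasFDerivAt (fun p : ℝ×ℝ×ℝ => p.2.2) pθ p := pθ.hasFDerivAt

lemma hsinx (p : ℝ×ℝ×ℝ) :
    HasFDerivAt (fun p : ℝ×ℝ×ℝ => Real.sin p.1) (Real.cos p.1 • px) p :=
  (Real.hasDerivAt_sin p.1).comp_hasFDerivAt p (hpx p)
lemma hcosx (p : ℝ×ℝ×ℝ) :
    HasFDerivAt (fun p : ℝ×ℝ×ℝ => Real.cos p.1) ((-Real.sin p.1) • px) p :=
  (Real.hasDerivAt_cos p.1).comp_hasFDerivAt p (hpx p)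
lemma hsinθ (p : ℝ×ℝ×ℝ) :
    HasFDerivAt (fun p : ℝ×ℝ×ℝ => Real.sin p.2.2) (Real.cos p.2.2 • pθ) p :=
  by have := (Real.hasDerivAt_sin p.2.2).comp_hasFDerivAt p (hpθ p); exact this
lemma hcosθ (p : ℝ×ℝ×ℝ) :
    HasFDerivAt (fun p : ℝ×ℝ×ℝ => Real.cos p.2.2) ((-Real.sin p.2.2) • pθ) p :=
  by have := (Real.hasDerivAt_cos p.2.2).comp_hasFDerivAt p (hpθ p); exact this

/-- derivative of the third component of X0 -/
noncomputable def E3 (κ γ : ℝ) (p : ℝ×ℝ×ℝ) : (ℝ×ℝ×ℝ) →L[ℝ] ℝ :=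
  ((-γ) • (Real.cos p.2.2 • pθ) + (-Real.sin p.2.2) • pθ) -
    ((κ * Real.cos p.1) • ((-Real.sin p.2.2) • pθ) +
      (Real.cos p.2.2 + 1) • (κ • ((-Real.sin p.1) • px)))

lemma hE3 (κ γ : ℝ) (p : ℝ×ℝ×ℝ) :
    HasFDerivAt (fun p : ℝ×ℝ×ℝ => -γ * Real.sin p.2.2 + Real.cos p.2.2 -
      κ * Real.cos p.1 * (Real.cos p.2.2 + 1) - 1) (E3 κ γ p) p :=
  ((((hsinθ p).const_mul (-γ)).add (hcosθ p)).sub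
      (((hcosx p).const_mul κ).mul ((hcosθ p).add_const 1))).sub_const (1:ℝ)

noncomputable def D0 (κ γ : ℝ) (p : ℝ×ℝ×ℝ) : (ℝ×ℝ×ℝ) →L[ℝ] ℝ×ℝ×ℝ :=
  py.prod ((((-γ) • py) - κ • (Real.cos p.1 • px)).prod (E3 κ γ p))

lemma hX0d (κ γ : ℝ) (p : ℝ×ℝ×ℝ) :
    HasFDerivAt (fun p : ℝ×ℝ×ℝ => (p.2.1, -γ * p.2.1 - κ * Real.sin p.1,
      -γ * Real.sin p.2.2 + Real.cos p.2.2 - κ * Real.cos p.1 * (Real.cos p.2.2 + 1) - 1))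
      (D0 κ γ p) p :=
  (hpy p).prodMk ((((hpy p).const_mul (-γ)).sub ((hsinx p).const_mul κ)).prodMk (hE3 κ γ p))

lemma bracket1 (κ γ σ : ℝ) :
    lieBracket (fun _ => ((0:ℝ), σ, (0:ℝ)))
      (fun p : ℝ×ℝ×ℝ => (p.2.1, -γ * p.2.1 - κ * Real.sin p.1,
        -γ * Real.sin p.2.2 + Real.cos p.2.2 - κ * Real.cos p.1 * (Real.cos p.2.2 + 1) - 1))
      = fun _ => (σ, -γ*σ, 0) := by
  funext p
  simp only [lieBracket, (hX0d κ γ p).fderiv, fderiv_const]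
  simp [D0, E3, px, py, pθ, Prod.ext_iff]

lemma bracket2 (κ γ σ : ℝ) :
    lieBracket (fun _ => (σ, -γ*σ, (0:ℝ)))
      (fun p : ℝ×ℝ×ℝ => (p.2.1, -γ * p.2.1 - κ * Real.sin p.1,
        -γ * Real.sin p.2.2 + Real.cos p.2.2 - κ * Real.cos p.1 * (Real.cos p.2.2 + 1) - 1))
      = fun p => (-γ*σ, γ^2*σ - κ*σ*Real.cos p.1,
          κ*σ*Real.sin p.1*(Real.cos p.2.2+1)) := by
  funext p
  simp only [lieBracket, (hX0d κ γ p).fderiv, fderiv_const]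
  simp [D0, E3, px, py, pθ, Prod.ext_iff]
  constructor <;> ring

lemma bracket3 (κ γ σ : ℝ) :
    lieBracket (fun p : ℝ×ℝ×ℝ => (-γ*σ, γ^2*σ - κ*σ*Real.cos p.1,
        κ*σ*Real.sin p.1*(Real.cos p.2.2+1)))
      (fun p : ℝ×ℝ×ℝ => (p.2.1, -γ * p.2.1 - κ * Real.sin p.1,
        -γ * Real.sin p.2.2 + Real.cos p.2.2 - κ * Real.cos p.1 * (Real.cos p.2.2 + 1) - 1))
      = fun p : ℝ×ℝ×ℝ =>
        (γ^2*σ - κ*σ*Real.cos p.1,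
         -γ^3*σ + 2*γ*κ*σ*Real.cos p.1 - κ*σ*p.2.1*Real.sin p.1,
         (-γ*Real.cos p.2.2 - Real.sin p.2.2 + κ*Real.cos p.1*Real.sin p.2.2) *
             (κ*σ*Real.sin p.1*(Real.cos p.2.2+1))
           - γ*σ*(κ*Real.sin p.1*(Real.cos p.2.2+1))
           + κ*σ*(Real.sin p.1*Real.sin p.2.2) *
             (-γ*Real.sin p.2.2 + Real.cos p.2.2 - κ*Real.cos p.1*(Real.cos p.2.2+1) - 1)
           - κ*σ*(Real.cos p.2.2+1)*(Real.cos p.1*p.2.1)) := by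
  funext p
  have hW := (hasFDerivAt_const (-γ*σ) p).prodMk
    ((((hcosx p).const_mul (κ*σ)).const_sub (γ^2*σ)).prodMk
      ((((hsinx p).const_mul (κ*σ)).mul ((hcosθ p).add_const 1))))
  simp only [Pi.mul_apply, Pi.sub_apply, Pi.add_apply] at hW
  simp only [lieBracket, (hX0d κ γ p).fderiv, hW.fderiv]
  simp [D0, E3, px, py, pθ, Prod.ext_iff]
  constructor <;> ring

lemma bracket4 (κ γ σ : ℝ) :
    lieBracket
      (fun p : ℝ×ℝ×ℝ =>
        (γ^2*σ - κ*σ*Real.cos p.1,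
         -γ^3*σ + 2*γ*κ*σ*Real.cos p.1 - κ*σ*p.2.1*Real.sin p.1,
         (-γ*Real.cos p.2.2 - Real.sin p.2.2 + κ*Real.cos p.1*Real.sin p.2.2) *
             (κ*σ*Real.sin p.1*(Real.cos p.2.2+1))
           - γ*σ*(κ*Real.sin p.1*(Real.cos p.2.2+1))
           + κ*σ*(Real.sin p.1*Real.sin p.2.2) *
             (-γ*Real.sin p.2.2 + Real.cos p.2.2 - κ*Real.cos p.1*(Real.cos p.2.2+1) - 1)
           - κ*σ*(Real.cos p.2.2+1)*(Real.cos p.1*p.2.1)))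
      (fun _ => ((0:ℝ), σ, (0:ℝ)))
      = fun p : ℝ×ℝ×ℝ =>
          (0, κ*σ^2*Real.sin p.1, κ*σ^2*Real.cos p.1*(Real.cos p.2.2+1)) := by
  funext p
  have h1 := ((hcosx p).const_mul (κ*σ)).const_sub (γ^2*σ)
  have h2 := (((hcosx p).const_mul (2*γ*κ*σ)).const_add (-γ^3*σ)).sub
    (((hpy p).const_mul (κ*σ)).mul (hsinx p))
  have T1 := ((((hcosθ p).const_mul (-γ)).sub (hsinθ p)).add
      (((hcosx p).const_mul κ).mul (hsinθ p))).mul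
    (((hsinx p).const_mul (κ*σ)).mul ((hcosθ p).add_const 1))
  have T2 := (((hsinx p).const_mul κ).mul ((hcosθ p).add_const 1)).const_mul (γ*σ)
  have T3 := (((hsinx p).mul (hsinθ p)).const_mul (κ*σ)).mul (hE3 κ γ p)
  have T4 := (((hcosθ p).add_const 1).const_mul (κ*σ)).mul ((hcosx p).mul (hpy p))
  have hWW := h1.prodMk (h2.prodMk (((T1.sub T2).add T3).sub T4))
  simp only [Pi.mul_apply, Pi.sub_apply, Pi.add_apply] at hWW
  simp only [lieBracket, hWW.fderiv, fderiv_fun_const]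
  simp [E3, px, py, pθ, Prod.ext_iff]
  constructor <;> ring

lemma span3 (s t u a b c : ℝ) (hs : s ≠ 0) (ht : t ≠ 0) (hc : c ≠ 0) :
    Submodule.span ℝ ({((0:ℝ), s, (0:ℝ)), (t, u, (0:ℝ)), (a, b, c)} : Set (ℝ×ℝ×ℝ)) = ⊤ := by
  rw [eq_top_iff]
  rintro ⟨v1, v2, v3⟩ -
  have m1 : ((0:ℝ), s, (0:ℝ)) ∈ Submodule.span ℝ
      ({((0:ℝ), s, (0:ℝ)), (t, u, (0:ℝ)), (a, b, c)} : Set (ℝ×ℝ×ℝ)) :=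
    Submodule.subset_span (by simp)
  have m2 : ((t:ℝ), u, (0:ℝ)) ∈ Submodule.span ℝ
      ({((0:ℝ), s, (0:ℝ)), (t, u, (0:ℝ)), (a, b, c)} : Set (ℝ×ℝ×ℝ)) :=
    Submodule.subset_span (by simp)
  have m3 : ((a:ℝ), b, c) ∈ Submodule.span ℝ
      ({((0:ℝ), s, (0:ℝ)), (t, u, (0:ℝ)), (a, b, c)} : Set (ℝ×ℝ×ℝ)) :=
    Submodule.subset_span (by simp)
  set δ := v3 / c with hδ
  set β := (v1 - δ * a) / t with hβ
  set α := (v2 - β * u - δ * b) / s with hα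
  have key : (v1, v2, v3) = α • ((0:ℝ), s, (0:ℝ)) + β • ((t:ℝ), u, (0:ℝ)) + δ • ((a:ℝ), b, c) := by
    simp only [Prod.smul_mk, smul_eq_mul, Prod.mk_add_mk, Prod.ext_iff]
    refine ⟨by rw [hβ]; field_simp; ring, by rw [hα]; field_simp; ring, by rw [hδ]; field_simp; ring⟩
  rw [key]
  exact add_mem (add_mem (Submodule.smul_mem _ _ m1) (Submodule.smul_mem _ _ m2))
    (Submodule.smul_mem _ _ m3)

lemma sin_ne_zero_of (x : ℝ) (hx : x ∈ Set.Ico 0 (2*π)) (h0 : x ≠ 0) (hπ : x ≠ π) :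
    Real.sin x ≠ 0 := by
  intro h
  obtain ⟨n, hn⟩ := Real.sin_eq_zero_iff.1 h
  obtain ⟨hx1, hx2⟩ := hx
  have hπ0 := Real.pi_pos
  have hn0 : (0:ℝ) ≤ n := by nlinarith [hx1, hn]
  have hn2 : (n:ℝ) < 2 := by nlinarith [hx2, hn]
  have h0' : (0:ℤ) ≤ n := by exact_mod_cast hn0
  have h2' : n < 2 := by exact_mod_cast hn2
  interval_cases n
  · apply h0; simpa using hn.symm
  · apply hπ; simpa using hn.symm

lemma cosθ_ne (θ : ℝ) (hθ : θ ∈ Set.Ico 0 (2*π)) (h : θ ≠ π) : Real.cos θ + 1 ≠ 0 := by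
  intro h'
  have hc : Real.cos θ = -1 := by linarith
  obtain ⟨k, hk⟩ := Real.cos_eq_neg_one_iff.1 hc
  obtain ⟨hθ1, hθ2⟩ := hθ
  have hπ0 := Real.pi_pos
  have hk0 : (-1:ℝ) < k := by nlinarith
  have hk1 : (k:ℝ) < 1 := by nlinarith
  have h0' : (-1:ℤ) < k := by exact_mod_cast hk0
  have h1' : k < 1 := by exact_mod_cast hk1
  have : k = 0 := by omega
  subst this
  simp at hk
  exact h hk.symm

/-- The weak Hörmander condition for the projective process of the randomly forced
pendulum, with the torus coordinates `x, θ` ranging over `[0, 2π)`. -/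
theorem stmt7 (κ γ σ : ℝ) (hκ : 0 < κ) (hγ : 0 < γ) (hσ : 0 < σ)
    (X0 : ℝ × ℝ × ℝ → ℝ × ℝ × ℝ)
    (hX0 : X0 = fun p => (p.2.1, -γ * p.2.1 - κ * Real.sin p.1,
      -γ * Real.sin p.2.2 + Real.cos p.2.2 - κ * Real.cos p.1 * (Real.cos p.2.2 + 1) - 1))
    (X2 : ℝ × ℝ × ℝ → ℝ × ℝ × ℝ) (hX2 : X2 = fun _ => (0, σ, 0)) :
    ∀ x y θ : ℝ, x ∈ Set.Ico 0 (2 * π) → θ ∈ Set.Ico 0 (2 * π) →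
      ((θ ≠ π ∧ x ≠ 0 ∧ x ≠ π) →
        Submodule.span ℝ ({X2 (x, y, θ), lieBracket X2 X0 (x, y, θ),
          lieBracket (lieBracket X2 X0) X0 (x, y, θ)} : Set (ℝ × ℝ × ℝ)) = ⊤)
      ∧ (θ = π →
        Submodule.span ℝ ({X2 (x, y, θ), lieBracket X2 X0 (x, y, θ),
          X0 (x, y, θ)} : Set (ℝ × ℝ × ℝ)) = ⊤)
      ∧ ((x = 0 ∨ x = π) → θ ≠ π →
        Submodule.span ℝ ({X2 (x, y, θ), lieBracket X2 X0 (x, y, θ),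
          lieBracket (lieBracket (lieBracket (lieBracket X2 X0) X0) X0) X2 (x, y, θ)} :
            Set (ℝ × ℝ × ℝ)) = ⊤) := by
  subst hX0
  subst hX2
  intro x y θ hx hθ
  refine ⟨?_, ?_, ?_⟩
  · rintro ⟨hθπ, hx0, hxπ⟩
    have hs := sin_ne_zero_of x hx hx0 hxπ
    have hcθ := cosθ_ne θ hθ hθπ
    rw [bracket1 κ γ σ, bracket2 κ γ σ]
    exact span3 σ σ (-γ*σ) (-γ*σ) (γ^2*σ - κ*σ*Real.cos x)
      (κ*σ*Real.sin x*(Real.cos θ+1)) hσ.ne' hσ.ne'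
      (mul_ne_zero (mul_ne_zero (mul_ne_zero hκ.ne' hσ.ne') hs) hcθ)
  · intro hθπ
    subst hθπ
    have e : ((fun p : ℝ×ℝ×ℝ => (p.2.1, -γ * p.2.1 - κ * Real.sin p.1,
        -γ * Real.sin p.2.2 + Real.cos p.2.2 - κ * Real.cos p.1 * (Real.cos p.2.2 + 1) - 1))
          (x, y, π)) = ((y, -γ*y - κ*Real.sin x, -2) : ℝ×ℝ×ℝ) := by
      norm_num
    rw [e, bracket1 κ γ σ]
    exact span3 σ σ (-γ*σ) y (-γ*y - κ*Real.sin x) (-2) hσ.ne' hσ.ne' (by norm_num)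
  · intro hx' hθπ
    have hcθ := cosθ_ne θ hθ hθπ
    rw [bracket1 κ γ σ, bracket2 κ γ σ, bracket3 κ γ σ, bracket4 κ γ σ]
    rcases hx' with rfl | rfl
    · exact span3 σ σ (-γ*σ) 0 (κ*σ^2*Real.sin 0) (κ*σ^2*Real.cos 0*(Real.cos θ+1))
        hσ.ne' hσ.ne'
        (mul_ne_zero (mul_ne_zero (by positivity) (by norm_num)) hcθ)
    · exact span3 σ σ (-γ*σ) 0 (κ*σ^2*Real.sin π) (κ*σ^2*Real.cos π*(Real.cos θ+1))
        hσ.ne' hσ.ne'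
        (mul_ne_zero (mul_ne_zero (by positivity) (by norm_num [Real.cos_pi])) hcθ)
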